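/- The subspace X₀ = {x ∈ 2^κ : x(α) = 0 for at most finitely many α < κ} of the generalized Cantor space 2^κ is a nonempty κ-additive κ-perfect κ-Lindelöf fSC_κ-space; in particular X₀ is κ-Lindelöf. -/

import Mathlib

universe u v

open Cardinal Set

namespace GDST

/-- A *limit element* of an order: an element with some predecessor but
no immediate predecessor (i.e. it sits at a limit position). -/
def IsLimitElt {α : Type v} [LT α] (a : α) : Prop :=
  (∃ b, b < a) ∧ ∀ b, b < a → ∃ c, b < c ∧ c < a

/-- The space `X` has weight at most `κ`: it admits a topological basis of cardinality ≤ κ. -/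
def HasWeightLE (κ : Cardinal.{u}) (X : Type u) [TopologicalSpace X] : Prop :=
  ∃ B : Set (Set X), TopologicalSpace.IsTopologicalBasis B ∧ #B ≤ κ

/-- `X` is `κ`-additive: intersections of fewer than `κ` open sets are open. -/
def KAdditive (κ : Cardinal.{u}) (X : Type u) [TopologicalSpace X] : Prop :=
  ∀ S : Set (Set X), #S < κ → (∀ U ∈ S, IsOpen U) → IsOpen (⋂₀ S)

/-- `X` is `κ`-Lindelöf: every open cover has a subcover of size `< κ`. -/
def KLindelof (κ : Cardinal.{u}) (X : Type u) [TopologicalSpace X] : Prop :=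
  ∀ 𝒰 : Set (Set X), (∀ U ∈ 𝒰, IsOpen U) → ⋃₀ 𝒰 = Set.univ →
    ∃ 𝒱 ⊆ 𝒰, #𝒱 < κ ∧ ⋃₀ 𝒱 = Set.univ

/-- `X` is `κ`-perfect: no point `x` is `κ`-isolated, i.e. no `{x}` is an intersection
of fewer than `κ` open sets. -/
def KPerfect (κ : Cardinal.{u}) (X : Type u) [TopologicalSpace X] : Prop :=
  ∀ x : X, ¬ ∃ S : Set (Set X), #S < κ ∧ (∀ U ∈ S, IsOpen U) ∧ ⋂₀ S = {x}

/-- `A` is `G_δ^κ` in `X`: an intersection of `κ`-many open sets. -/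
def IsGDeltaKappa (κ : Cardinal.{u}) {X : Type u} [TopologicalSpace X] (A : Set X) : Prop :=
  ∃ U : κ.ord.ToType → Set X, (∀ i, IsOpen (U i)) ∧ A = ⋂ i, U i

/-! ### Generalized Baire and Cantor spaces -/

/-- The bounded topology on `ι → A`: generated by the sets of functions with a
prescribed restriction to a proper initial segment `{b | b < a}` of `ι`. -/
def BoundedTopology (ι : Type u) [LinearOrder ι] (A : Type v) : TopologicalSpace (ι → A) :=
  TopologicalSpace.generateFrom
    {U | ∃ (a : ι) (y : ι → A), U = {x : ι → A | ∀ b, b < a → x b = y b}}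

/-- The generalized Baire space `κ^κ`. -/
def GenBaire (κ : Cardinal.{u}) : Type u := κ.ord.ToType → κ.ord.ToType

noncomputable instance (κ : Cardinal.{u}) : TopologicalSpace (GenBaire κ) :=
  BoundedTopology κ.ord.ToType κ.ord.ToType

/-- The generalized Cantor space `2^κ`. -/
def GenCantor (κ : Cardinal.{u}) : Type u := κ.ord.ToType → Bool

noncomputable instance (κ : Cardinal.{u}) : TopologicalSpace (GenCantor κ) :=
  BoundedTopology κ.ord.ToType Bool

/-! ### The strong and fair (strong) κ-Choquet games -/

/-- A transfinite sequence of moves of player I: at each round a pair `(U, x)`. -/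
abbrev IMoves (κ : Cardinal.{u}) (X : Type u) : Type u := κ.ord.ToType → Set X × X

/-- A strategy for player II: given the moves of I (only the moves up to the current
round may be used, see `IsIIStrategy`) and the current round, produce II's move. -/
abbrev Strategy (κ : Cardinal.{u}) (X : Type u) : Type u := IMoves κ X → κ.ord.ToType → Set X

/-- The intersection of the sets played before round `a`. -/
def InterBelow {ι : Type u} {X : Type u} [LT ι] (V : ι → Set X) (a : ι) : Set X :=
  ⋂ b, ⋂ (_ : b < a), V b

/-- `U` is relatively open in `T`. -/
def RelOpenIn {X : Type u} [TopologicalSpace X] (T U : Set X) : Prop :=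
  ∃ W : Set X, IsOpen W ∧ U = W ∩ T

/-- Player I's move at round `a` is legal: `(f a).1` is a nonempty relatively open subset of
the intersection of all previously played sets, and the point `(f a).2` belongs to it. -/
def LegalI {κ : Cardinal.{u}} {X : Type u} [TopologicalSpace X]
    (σ : Strategy κ X) (f : IMoves κ X) (a : κ.ord.ToType) : Prop :=
  RelOpenIn (InterBelow (σ f) a) (f a).1 ∧ (f a).2 ∈ (f a).1

/-- Player II's answer (by `σ`) at round `a` is legal: it is relatively open in the
intersection of all previously played sets, contains I's point, and is contained in I's set. -/
def LegalII {κ : Cardinal.{u}} {X : Type u} [TopologicalSpace X]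
    (σ : Strategy κ X) (f : IMoves κ X) (a : κ.ord.ToType) : Prop :=
  RelOpenIn (InterBelow (σ f) a) (σ f a) ∧ (f a).2 ∈ σ f a ∧ σ f a ⊆ (f a).1

/-- All moves before round `a` were legal. -/
def LegalBelow {κ : Cardinal.{u}} {X : Type u} [TopologicalSpace X]
    (σ : Strategy κ X) (f : IMoves κ X) (a : κ.ord.ToType) : Prop :=
  ∀ b, b < a → LegalI σ f b ∧ LegalII σ f b

/-- `σ` only depends on the moves of I played so far. -/
def IsIIStrategy {κ : Cardinal.{u}} {X : Type u} (σ : Strategy κ X) : Prop :=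
  ∀ f g : IMoves κ X, ∀ a, (∀ b, b ≤ a → f b = g b) → σ f a = σ g a

/-- `σ` is a winning strategy for player II in the strong κ-Choquet game `G^s_κ(X)`:
it answers legally to legal positions, and in any (possibly partial) legal run the
intersection of the played sets at every limit round—including the final one—is nonempty. -/
def WinningStrong {κ : Cardinal.{u}} {X : Type u} [TopologicalSpace X]
    (σ : Strategy κ X) : Prop :=
  IsIIStrategy σ ∧
  (∀ f a, LegalBelow σ f a → LegalI σ f a → LegalII σ f a) ∧
  (∀ f a, IsLimitElt a → LegalBelow σ f a → (InterBelow (σ f) a).Nonempty) ∧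
  (∀ f, (∀ a, LegalI σ f a ∧ LegalII σ f a) → (⋂ a, σ f a).Nonempty)

/-- `σ` is a winning strategy for player II in the fair strong κ-Choquet game `fG^s_κ(X)`:
it answers legally to legal positions, and for every legal run either the intersection of
the played sets is empty at some limit round `< κ`, or the final intersection is nonempty. -/
def WinningFair {κ : Cardinal.{u}} {X : Type u} [TopologicalSpace X]
    (σ : Strategy κ X) : Prop :=
  IsIIStrategy σ ∧
  (∀ f a, LegalBelow σ f a → LegalI σ f a → LegalII σ f a) ∧
  (∀ f, (∀ a, LegalI σ f a ∧ LegalII σ f a) →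
    (∃ a, IsLimitElt a ∧ InterBelow (σ f) a = ∅) ∨ (⋂ a, σ f a).Nonempty)

/-- `X` is a strong κ-Choquet space. -/
def SCSpace (κ : Cardinal.{u}) (X : Type u) [TopologicalSpace X] : Prop :=
  HasWeightLE κ X ∧ ∃ σ : Strategy κ X, WinningStrong σ

/-- `X` is a strongly fair κ-Choquet space. -/
def fSCSpace (κ : Cardinal.{u}) (X : Type u) [TopologicalSpace X] : Prop :=
  HasWeightLE κ X ∧ ∃ σ : Strategy κ X, WinningFair σ

/-! ### Trees on κ -/

/-- Sequences of length `< κ` with values in `κ`, encoded as pairs `(a, x)` representing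
the restriction of `x : κ → κ` to the initial segment `{b | b < a}`. -/
abbrev TreeSeq (κ : Cardinal.{u}) : Type u := κ.ord.ToType × (κ.ord.ToType → κ.ord.ToType)

/-- `T` is a tree on `κ`: membership of `(a, x)` only depends on the restriction of `x`
below `a` (so that `T` really is a set of `<κ`-sequences), and `T` is closed under
initial segments. -/
def IsTreeOn (κ : Cardinal.{u}) (T : Set (TreeSeq κ)) : Prop :=
  (∀ a, ∀ x y : κ.ord.ToType → κ.ord.ToType,
      (∀ b, b < a → x b = y b) → ((a, x) ∈ T ↔ (a, y) ∈ T)) ∧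
  (∀ a x, (a, x) ∈ T → ∀ b, b ≤ a → (b, x) ∈ T)

/-- The body `[T]` of a tree `T` on `κ`. -/
def TreeBody (κ : Cardinal.{u}) (T : Set (TreeSeq κ)) : Set (GenBaire κ) :=
  {x | ∀ a, (a, x) ∈ T}

/-- `T` is pruned: every element has extensions in `T` of every length `< κ`. -/
def TreePruned (κ : Cardinal.{u}) (T : Set (TreeSeq κ)) : Prop :=
  ∀ a x, (a, x) ∈ T → ∀ c, a ≤ c → ∃ y, (∀ b, b < a → y b = x b) ∧ (c, y) ∈ T

/-- `T` is `<κ`-closed: a limit-length sequence all of whose proper initial segments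
lie in `T` lies in `T`. -/
def TreeLtClosed (κ : Cardinal.{u}) (T : Set (TreeSeq κ)) : Prop :=
  ∀ a, IsLimitElt a → ∀ x, (∀ b, b < a → (b, x) ∈ T) → (a, x) ∈ T

/-- `T` is superclosed: a pruned and `<κ`-closed tree. -/
def IsSuperclosedTree (κ : Cardinal.{u}) (T : Set (TreeSeq κ)) : Prop :=
  IsTreeOn κ T ∧ TreePruned κ T ∧ TreeLtClosed κ T

/-- A subset of the generalized Baire space is superclosed if it is the body of a
superclosed tree. -/
def IsSuperclosedSet (κ : Cardinal.{u}) (C : Set (GenBaire κ)) : Prop :=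
  ∃ T : Set (TreeSeq κ), IsSuperclosedTree κ T ∧ C = TreeBody κ T

/-- The `a`-th level of a tree `T` on `κ`. -/
def TreeLev (κ : Cardinal.{u}) (T : Set (TreeSeq κ)) (a : κ.ord.ToType) :
    Set ({b : κ.ord.ToType // b < a} → κ.ord.ToType) :=
  {s | ∃ x, (a, x) ∈ T ∧ ∀ b : {b : κ.ord.ToType // b < a}, x b.1 = s b}

/-- κ has the tree property: every tree on κ all of whose levels are nonempty of size `< κ`
has a (cofinal) branch. -/
def TreeProperty (κ : Cardinal.{u}) : Prop :=
  ∀ T : Set (TreeSeq κ), IsTreeOn κ T →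
    (∀ a, (TreeLev κ T a).Nonempty ∧ #(TreeLev κ T a) < κ) →
    ∃ x : κ.ord.ToType → κ.ord.ToType, ∀ a, (a, x) ∈ T

/-- κ is (strongly) inaccessible. -/
def Inaccessible (κ : Cardinal.{u}) : Prop :=
  ℵ₀ < κ ∧ κ.IsRegular ∧ ∀ μ : Cardinal.{u}, μ < κ → (2 : Cardinal.{u}) ^ μ < κ

/-- κ is weakly compact: inaccessible with the tree property. -/
def WeaklyCompact (κ : Cardinal.{u}) : Prop := Inaccessible κ ∧ TreeProperty κ

/-! ### κ-Borel sets -/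

/-- The κ-Borel subsets of a topological space: the smallest family containing the open
sets and closed under complements and unions of at most κ-many sets. -/
inductive KBorel (κ : Cardinal.{u}) {X : Type u} [TopologicalSpace X] : Set X → Prop
  | of_isOpen (U : Set X) : IsOpen U → KBorel κ U
  | compl (S : Set X) : KBorel κ S → KBorel κ Sᶜ
  | iUnion (ι : Type u) (f : ι → Set X) : #ι ≤ κ → (∀ i, KBorel κ (f i)) → KBorel κ (⋃ i, f i)

/-! ### 𝔾-metric spaces -/

section GMetric

variable (G : Type u) [AddCommGroup G] [LinearOrder G] [IsOrderedAddMonoid G]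

/-- The positive cone of `G` has coinitiality `κ`: there is a coinitial set of positive
elements of size `≤ κ`, and no such set of size `< κ`. -/
def HasDegree (κ : Cardinal.{u}) : Prop :=
  (∃ S : Set G, (∀ ε ∈ S, 0 < ε) ∧ (∀ δ : G, 0 < δ → ∃ ε ∈ S, ε ≤ δ) ∧ #S ≤ κ) ∧
  (∀ S : Set G, (∀ ε ∈ S, 0 < ε) → (∀ δ : G, 0 < δ → ∃ ε ∈ S, ε ≤ δ) → κ ≤ #S)

variable {G}

/-- `d` is a `𝔾`-metric on `X`. -/
structure IsGMetric {X : Type u} (d : X → X → G) : Prop where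
  nonneg : ∀ x y, 0 ≤ d x y
  eq_zero_iff : ∀ x y, d x y = 0 ↔ x = y
  symm : ∀ x y, d x y = d y x
  triangle : ∀ x y z, d x z ≤ d x y + d y z

/-- The open ball of center `x` and radius `ε`. -/
def GBall {X : Type u} (d : X → X → G) (x : X) (ε : G) : Set X := {y | d x y < ε}

/-- The topology induced by a `𝔾`-metric. -/
def GMetricTopology {X : Type u} (d : X → X → G) : TopologicalSpace X :=
  TopologicalSpace.generateFrom {U | ∃ x ε, 0 < ε ∧ U = GBall d x ε}

/-- The `𝔾`-metric `d` is compatible with the topology of `X`. -/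
def GCompatible {X : Type u} [t : TopologicalSpace X] (d : X → X → G) : Prop :=
  GMetricTopology d = t

/-- A `κ`-sequence is `d`-Cauchy. -/
def GCauchy (κ : Cardinal.{u}) {X : Type u} (d : X → X → G) (x : κ.ord.ToType → X) : Prop :=
  ∀ ε : G, 0 < ε → ∃ a, ∀ b, a ≤ b → ∀ c, a ≤ c → d (x b) (x c) < ε

/-- A `κ`-sequence `d`-converges to `y`. -/
def GConvergesTo (κ : Cardinal.{u}) {X : Type u} (d : X → X → G)
    (x : κ.ord.ToType → X) (y : X) : Prop :=
  ∀ ε : G, 0 < ε → ∃ a, ∀ b, a ≤ b → d (x b) y < ε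

/-- `d` is Cauchy-complete: every `d`-Cauchy `κ`-sequence converges. -/
def GCauchyComplete (κ : Cardinal.{u}) {X : Type u} (d : X → X → G) : Prop :=
  ∀ x : κ.ord.ToType → X, GCauchy κ d x → ∃ y, GConvergesTo κ d x y

/-- `X` is `𝔾`-metrizable: it admits a compatible `𝔾`-metric. -/
def GMetrizable (G : Type u) [AddCommGroup G] [LinearOrder G] [IsOrderedAddMonoid G]
    (X : Type u) [TopologicalSpace X] : Prop :=
  ∃ d : X → X → G, IsGMetric d ∧ GCompatible d

/-- `X` is `𝔾`-Polish: it has weight `≤ κ` and admits a compatible Cauchy-complete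
`𝔾`-metric. -/
def GPolish (G : Type u) [AddCommGroup G] [LinearOrder G] [IsOrderedAddMonoid G] (κ : Cardinal.{u})
    (X : Type u) [TopologicalSpace X] : Prop :=
  HasWeightLE κ X ∧ ∃ d : X → X → G, IsGMetric d ∧ GCompatible d ∧ GCauchyComplete κ d

/-- `d` is spherically complete: every (nonempty) ⊆-decreasing transfinite sequence of open
`d`-balls has nonempty intersection. -/
def SphericallyComplete {X : Type u} (d : X → X → G) : Prop :=
  ∀ o : Ordinal.{u}, o ≠ 0 → ∀ c : o.ToType → Set X,
    (∀ i, ∃ x ε, 0 < ε ∧ c i = GBall d x ε) →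
    (∀ i j, i ≤ j → c j ⊆ c i) → (⋂ i, c i).Nonempty

/-- `d` is spherically `<κ`-complete: every (nonempty) ⊆-decreasing sequence of open
`d`-balls of length `< κ` has nonempty intersection. -/
def SphericallyLtComplete (κ : Cardinal.{u}) {X : Type u} (d : X → X → G) : Prop :=
  ∀ o : Ordinal.{u}, o ≠ 0 → o < κ.ord → ∀ c : o.ToType → Set X,
    (∀ i, ∃ x ε, 0 < ε ∧ c i = GBall d x ε) →
    (∀ i j, i ≤ j → c j ⊆ c i) → (⋂ i, c i).Nonempty

/-- `X` is a spherically complete `𝔾`-Polish space. -/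
def GPolishSphericallyComplete (G : Type u) [AddCommGroup G] [LinearOrder G] [IsOrderedAddMonoid G] (κ : Cardinal.{u})
    (X : Type u) [TopologicalSpace X] : Prop :=
  HasWeightLE κ X ∧
    ∃ d : X → X → G, IsGMetric d ∧ GCompatible d ∧ GCauchyComplete κ d ∧ SphericallyComplete d

/-- `X` is a spherically `<κ`-complete `𝔾`-Polish space. -/
def GPolishSphericallyLtComplete (G : Type u) [AddCommGroup G] [LinearOrder G] [IsOrderedAddMonoid G] (κ : Cardinal.{u})
    (X : Type u) [TopologicalSpace X] : Prop :=
  HasWeightLE κ X ∧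
    ∃ d : X → X → G, IsGMetric d ∧ GCompatible d ∧ GCauchyComplete κ d ∧
      SphericallyLtComplete κ d

end GMetric

/-! ### κ-Borel spaces -/

/-- `ℬ` is a `κ⁺`-algebra on `X`: closed under complements and unions of at most
κ-many sets. -/
def IsKplusAlgebra (κ : Cardinal.{u}) {X : Type u} (ℬ : Set (Set X)) : Prop :=
  (∀ S ∈ ℬ, Sᶜ ∈ ℬ) ∧
  (∀ (ι : Type u) (f : ι → Set X), #ι ≤ κ → (∀ i, f i ∈ ℬ) → (⋃ i, f i) ∈ ℬ)

/-- `ℬ` separates the points of `X`. -/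
def SepPoints {X : Type u} (ℬ : Set (Set X)) : Prop :=
  ∀ x y : X, x ≠ y → ∃ S ∈ ℬ, x ∈ S ∧ y ∉ S

/-- `(X, ℬ)` is a κ-Borel space: a `κ⁺`-algebra that separates points and is generated
(as a `κ⁺`-algebra) by a subfamily of size `≤ κ`. -/
def IsKBorelSpace (κ : Cardinal.{u}) {X : Type u} (ℬ : Set (Set X)) : Prop :=
  IsKplusAlgebra κ ℬ ∧ SepPoints ℬ ∧
    ∃ 𝒢 ⊆ ℬ, #𝒢 ≤ κ ∧
      ∀ ℬ' : Set (Set X), IsKplusAlgebra κ ℬ' → 𝒢 ⊆ ℬ' → ℬ ⊆ ℬ'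

/-- The restriction `ℬ↾A` of a family of subsets of `X` to `A ⊆ X`. -/
def RestrictFam {X : Type u} (ℬ : Set (Set X)) (A : Set X) : Set (Set ↥A) :=
  {T | ∃ S ∈ ℬ, T = Subtype.val ⁻¹' S}

/-- The family of κ-Borel sets of a topological space. -/
def KBorelFam (κ : Cardinal.{u}) (X : Type u) [TopologicalSpace X] : Set (Set X) :=
  {S | KBorel κ S}

/-- `e` is a κ-Borel isomorphism between `(X, ℬ)` and `(Y, 𝒞)`: a bijection under which
images and preimages of distinguished sets are distinguished. -/
def IsKBorelSpaceIso {X Y : Type u} (ℬ : Set (Set X)) (𝒞 : Set (Set Y)) (e : X ≃ Y) : Prop :=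
  (∀ S ∈ ℬ, e '' S ∈ 𝒞) ∧ (∀ S ∈ 𝒞, e ⁻¹' S ∈ ℬ)

/-- `(X, ℬ)` is a standard κ-Borel space: it is a κ-Borel space which is κ-Borel isomorphic
to a κ-Borel subset of the generalized Baire space (with the restricted κ-Borel structure). -/
def IsStandardKBorel (κ : Cardinal.{u}) {X : Type u} (ℬ : Set (Set X)) : Prop :=
  IsKBorelSpace κ ℬ ∧
    ∃ B₀ : Set (GenBaire κ), KBorel κ B₀ ∧
      ∃ e : X ≃ ↥B₀, IsKBorelSpaceIso ℬ (RestrictFam (KBorelFam κ (GenBaire κ)) B₀) e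

/-! ### Auxiliary material for Statement 16 -/

section Stmt16Aux

variable {κ : Cardinal.{u}}

/-- The basic open set of the bounded topology determined by `y` below `a`. -/
def Nb (a : κ.ord.ToType) (y : GenCantor κ) : Set (GenCantor κ) :=
  {x : GenCantor κ | ∀ b, b < a → x b = y b}

theorem mem_Nb_self (a : κ.ord.ToType) (y : GenCantor κ) : y ∈ Nb a y := fun _ _ => rfl

theorem Nb_antitone {a a' : κ.ord.ToType} (h : a ≤ a') (y : GenCantor κ) :
    Nb a' y ⊆ Nb a y := fun _ hx b hb => hx b (lt_of_lt_of_le hb h)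

theorem Nb_of_mem {a : κ.ord.ToType} {y x : GenCantor κ} (hx : x ∈ Nb a y) :
    Nb a x ⊆ Nb a y := fun z hz b hb => (hz b hb).trans (hx b hb)

theorem isOpen_Nb (a : κ.ord.ToType) (y : GenCantor κ) : IsOpen (Nb a y) :=
  TopologicalSpace.isOpen_generateFrom_of_mem ⟨a, y, rfl⟩

theorem nonempty_toType (hκ : ℵ₀ ≤ κ) : Nonempty κ.ord.ToType := by
  rw [Ordinal.toType_nonempty_iff_ne_zero, ne_eq, Cardinal.ord_eq_zero]
  rintro rfl
  exact (lt_irrefl _ (lt_of_lt_of_le Cardinal.aleph0_pos hκ)).elim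

/-- Any subset of `κ.ord.ToType` of size `< κ` is bounded (κ regular). -/
theorem bound_of_small (hreg : κ.IsRegular) {S : Set κ.ord.ToType} (hS : #S < κ) :
    ∃ a : κ.ord.ToType, ∀ b ∈ S, b < a := by
  classical
  set e := Ordinal.ToType.mk (o := κ.ord) with he
  have hlim : Order.IsSuccLimit κ.ord := Cardinal.isSuccLimit_ord hreg.aleph0_le
  set g : S → Ordinal.{u} := fun b => Order.succ (e.symm b.1).1 with hg
  have hglt : ∀ b : S, g b < κ.ord := fun b => hlim.succ_lt (e.symm b.1).2
  have hsup : (⨆ b, g b) < κ.ord := Cardinal.iSup_lt_ord_of_isRegular hreg hS hglt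
  refine ⟨e ⟨_, hsup⟩, fun b hb => ?_⟩
  have h1 : e.symm b < (⟨_, hsup⟩ : Set.Iio κ.ord) := by
    show (e.symm b).1 < _
    exact lt_of_lt_of_le (Order.lt_succ _) (le_ciSup (Ordinal.bddAbove_range g) ⟨b, hb⟩)
  have := e.lt_iff_lt.mpr h1
  rwa [e.apply_symm_apply] at this

/-- Initial segments of `κ.ord.ToType` have size `< κ`. -/
theorem mk_Iio_lt (hreg : κ.IsRegular) (a : κ.ord.ToType) :
    #{b : κ.ord.ToType | b < a} < κ := by
  haveI hwo : IsWellOrder κ.ord.ToType ((· < ·) : κ.ord.ToType → κ.ord.ToType → Prop) :=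
    isWellOrder_lt
  have h2 := Ordinal.typein_lt_self a
  rw [Cardinal.lt_ord] at h2
  refine lt_of_eq_of_lt ?_ h2
  exact (Ordinal.card_typein (r := ((· < ·) : κ.ord.ToType → κ.ord.ToType → Prop)) a).symm

/-- Characterization of the open sets of the generalized Cantor space. -/
theorem isOpen_iff_Nb (hκ : ℵ₀ ≤ κ) {U : Set (GenCantor κ)} :
    IsOpen U ↔ ∀ x ∈ U, ∃ a, Nb a x ⊆ U := by
  constructor
  · intro h
    change TopologicalSpace.GenerateOpen _ U at h
    induction h with
    | basic V hV =>
      obtain ⟨a, y, rfl⟩ := hV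
      intro x hx
      exact ⟨a, Nb_of_mem hx⟩
    | univ =>
      intro x _
      obtain ⟨a⟩ := nonempty_toType hκ
      exact ⟨a, fun _ _ => trivial⟩
    | inter V W _ _ ihV ihW =>
      intro x hx
      obtain ⟨a, ha⟩ := ihV x hx.1
      obtain ⟨a', ha'⟩ := ihW x hx.2
      exact ⟨max a a', fun z hz =>
        ⟨ha (Nb_antitone (le_max_left _ _) x hz), ha' (Nb_antitone (le_max_right _ _) x hz)⟩⟩
    | sUnion 𝒮 _ ih =>
      rintro x ⟨V, hV, hxV⟩
      obtain ⟨a, ha⟩ := ih V hV x hxV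
      exact ⟨a, fun z hz => ⟨V, hV, ha hz⟩⟩
  · intro h
    choose a ha using h
    have : U = ⋃ x : U, Nb (a x.1 x.2) x.1 := by
      apply Set.Subset.antisymm
      · intro x hx
        exact Set.mem_iUnion.2 ⟨⟨x, hx⟩, mem_Nb_self _ _⟩
      · rintro z hz
        obtain ⟨x, hxz'⟩ := Set.mem_iUnion.1 hz
        exact ha x.1 x.2 hxz'
    rw [this]
    exact isOpen_iUnion fun x => isOpen_Nb _ _

/-- The generalized Cantor space is κ-additive. -/
theorem kAdditive_genCantor (hreg : κ.IsRegular) {ι' : Type u} (W : ι' → Set (GenCantor κ))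
    (hι : #ι' < κ) (hW : ∀ i, IsOpen (W i)) : IsOpen (⋂ i, W i) := by
  rw [isOpen_iff_Nb hreg.aleph0_le]
  intro x hx
  have h1 : ∀ i, ∃ a, Nb a x ⊆ W i := fun i =>
    (isOpen_iff_Nb hreg.aleph0_le).1 (hW i) x (Set.mem_iInter.1 hx i)
  choose a ha using h1
  obtain ⟨c, hc⟩ := bound_of_small hreg (S := Set.range a)
    (lt_of_le_of_lt Cardinal.mk_range_le hι)
  refine ⟨c, fun z hz => Set.mem_iInter.2 fun i => ha i ?_⟩
  exact Nb_antitone (le_of_lt (hc _ ⟨i, rfl⟩)) x hz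

/-- The subspace of `2^κ` of functions with finitely many `false` values. -/
abbrev Xzero (κ : Cardinal.{u}) : Set (GenCantor κ) :=
  {x : GenCantor κ | {a | x a = false}.Finite}

theorem kAdditive_Xzero (hreg : κ.IsRegular) : KAdditive κ ↥(Xzero κ) := by
  intro S hS hSopen
  have h0 : ∀ U : S, ∃ W : Set (GenCantor κ), IsOpen W ∧ Subtype.val ⁻¹' W = U.1 :=
    fun U => isOpen_induced_iff.1 (hSopen U.1 U.2)
  choose W hWopen hWeq using h0
  have h1 : ⋂₀ S = Subtype.val ⁻¹' (⋂ U : S, W U) := by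
    rw [Set.preimage_iInter, Set.sInter_eq_iInter]
    exact Set.iInter_congr fun U => (hWeq U).symm
  rw [h1]
  exact (kAdditive_genCantor hreg W hS hWopen).preimage continuous_subtype_val

theorem kPerfect_Xzero (hreg : κ.IsRegular) : KPerfect κ ↥(Xzero κ) := by
  rintro x ⟨S, hS, hSopen, hInter⟩
  have hxS : ∀ U ∈ S, x ∈ U := fun U hU => by
    have : x ∈ ⋂₀ S := hInter ▸ Set.mem_singleton x
    exact this U hU
  have h0 : ∀ U : S, ∃ W : Set (GenCantor κ), IsOpen W ∧ Subtype.val ⁻¹' W = U.1 :=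
    fun U => isOpen_induced_iff.1 (hSopen U.1 U.2)
  choose W hWopen hWeq using h0
  have hxW : ∀ U : S, x.1 ∈ W U := fun U => by
    have := hxS U.1 U.2
    rw [← hWeq U] at this
    exact this
  have h1 : ∀ U : S, ∃ a, Nb a x.1 ⊆ W U := fun U =>
    (isOpen_iff_Nb hreg.aleph0_le).1 (hWopen U) x.1 (hxW U)
  choose a ha using h1
  set Zx : Set κ.ord.ToType := {b | x.1 b = false} with hZx
  have hZfin : Zx.Finite := x.2
  have hsmall : #(Set.range a ∪ Zx : Set κ.ord.ToType) < κ := by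
    refine lt_of_le_of_lt (Cardinal.mk_union_le _ _) ?_
    exact Cardinal.add_lt_of_lt hreg.aleph0_le
      (lt_of_le_of_lt Cardinal.mk_range_le hS)
      (lt_of_lt_of_le hZfin.lt_aleph0 hreg.aleph0_le)
  obtain ⟨c, hc⟩ := bound_of_small hreg hsmall
  classical
  set y : GenCantor κ := Function.update x.1 c false with hy
  have hyX : y ∈ Xzero κ := by
    refine Set.Finite.subset (hZfin.union (Set.finite_singleton c)) ?_
    intro b hb
    by_cases hbc : b = c
    · exact Or.inr hbc
    · left
      have : y b = x.1 b := Function.update_of_ne hbc _ _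
      rw [hZx]
      rw [Set.mem_setOf_eq, this] at hb
      exact hb
  have hxc : x.1 c = true := by
    cases h : x.1 c with
    | false => exact absurd (hc c (Or.inr h)) (lt_irrefl c)
    | true => rfl
  have hyne : y ≠ x.1 := by
    intro h
    have : y c = x.1 c := congrFun h c
    exact Bool.false_ne_true ((Function.update_self (f := (x.1 : κ.ord.ToType → Bool)) c false).symm.trans (this.trans hxc))
  have hq : (⟨y, hyX⟩ : ↥(Xzero κ)) ∈ ⋂₀ S := by
    intro U hU
    have : (⟨y, hyX⟩ : ↥(Xzero κ)) ∈ Subtype.val ⁻¹' (W ⟨U, hU⟩) := by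
      refine ha ⟨U, hU⟩ ?_
      intro b hb
      have hbc : b ≠ c := by
        have : a ⟨U, hU⟩ < c := hc _ (Or.inl ⟨⟨U, hU⟩, rfl⟩)
        exact ne_of_lt (lt_trans hb this)
      exact Function.update_of_ne hbc _ _
    rw [hWeq ⟨U, hU⟩] at this
    exact this
  rw [hInter] at hq
  exact hyne (congrArg Subtype.val hq)

open Classical in
/-- The characteristic function (with value `false` on `F`). -/
noncomputable def chiF (F : Set κ.ord.ToType) : GenCantor κ :=
  fun b => if b ∈ F then false else true

theorem chiF_eq_false_iff {F : Set κ.ord.ToType} {b : κ.ord.ToType} :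
    chiF F b = false ↔ b ∈ F := by
  classical
  by_cases h : b ∈ F <;> simp [chiF, h]

theorem chiF_zeros (F : Set κ.ord.ToType) : {b | chiF F b = false} = F :=
  Set.ext fun _ => chiF_eq_false_iff

/-- Main induction for κ-Lindelöfness of `Xzero`. -/
theorem klindelof_aux (hreg : κ.IsRegular) (n : ℕ) :
    ∀ F : Set κ.ord.ToType, F.Finite →
    ∀ {ι' : Type u} (W : ι' → Set (GenCantor κ)), (∀ i, IsOpen (W i)) →
    (∀ x : GenCantor κ, {b | x b = false}.Finite → ∃ i, x ∈ W i) →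
    ∃ s : Set ι', #s < κ ∧
      ∀ x : GenCantor κ, {b | x b = false}.Finite → F ⊆ {b | x b = false} →
        ({b | x b = false} \ F).encard ≤ n → ∃ i ∈ s, x ∈ W i := by
  induction n with
  | zero =>
    intro F hF ι' W hWopen hcov
    obtain ⟨i₀, hi₀⟩ := hcov (chiF F) (by rw [chiF_zeros]; exact hF)
    refine ⟨{i₀}, ?_, ?_⟩
    · rw [Cardinal.mk_singleton]
      exact lt_of_lt_of_le Cardinal.one_lt_aleph0 hreg.aleph0_le
    · intro x hZ hFZ hcard
      have hempty : {b | x b = false} \ F = ∅ := by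
        rw [← Set.encard_eq_zero]
        exact le_antisymm (by simpa using hcard) zero_le
      have hx : x = chiF F := by
        funext b
        by_cases hb : b ∈ F
        · rw [hFZ hb]
          exact (chiF_eq_false_iff.mpr hb).symm
        · cases hxb : x b with
          | false =>
            exact absurd (Set.eq_empty_iff_forall_notMem.1 hempty b ⟨hxb, hb⟩) not_false
          | true =>
            cases hcb : chiF F b with
            | false => exact absurd (chiF_eq_false_iff.1 hcb) hb
            | true => rfl
      exact ⟨i₀, Set.mem_singleton i₀, hx ▸ hi₀⟩
  | succ n ih =>
    intro F hF ι' W hWopen hcov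
    obtain ⟨i₀, hi₀⟩ := hcov (chiF F) (by rw [chiF_zeros]; exact hF)
    obtain ⟨a₀, ha₀⟩ := (isOpen_iff_Nb hreg.aleph0_le).1 (hWopen i₀) _ hi₀
    obtain ⟨a₁, ha₁⟩ := bound_of_small hreg
      (lt_of_lt_of_le hF.lt_aleph0 hreg.aleph0_le)
    set a' : κ.ord.ToType := max a₀ a₁ with ha'
    set B : Set κ.ord.ToType := {b | b < a'} with hB
    have hIH : ∀ b : B, ∃ s : Set ι', #s < κ ∧
        ∀ x : GenCantor κ, {c | x c = false}.Finite →
          insert b.1 F ⊆ {c | x c = false} →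
          ({c | x c = false} \ insert b.1 F).encard ≤ n → ∃ i ∈ s, x ∈ W i :=
      fun b => ih (insert b.1 F) (hF.insert b.1) W hWopen hcov
    choose t ht1 ht2 using hIH
    refine ⟨{i₀} ∪ ⋃ b : B, t b, ?_, ?_⟩
    · refine lt_of_le_of_lt (Cardinal.mk_union_le _ _) ?_
      refine Cardinal.add_lt_of_lt hreg.aleph0_le
        (by rw [Cardinal.mk_singleton]
            exact lt_of_lt_of_le Cardinal.one_lt_aleph0 hreg.aleph0_le) ?_
      refine lt_of_le_of_lt (Cardinal.mk_iUnion_le _) ?_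
      exact Cardinal.mul_lt_of_lt hreg.aleph0_le (mk_Iio_lt hreg a')
        (Cardinal.iSup_lt_of_isRegular hreg (mk_Iio_lt hreg a') ht1)
    · intro x hZ hFZ hcard
      by_cases hcase : ∀ b, b < a' → x b = false → b ∈ F
      · refine ⟨i₀, Or.inl (Set.mem_singleton i₀), ?_⟩
        refine ha₀ (Nb_antitone (le_max_left a₀ a₁) _ ?_)
        intro b hb
        by_cases hbF : b ∈ F
        · rw [hFZ hbF]
          exact (chiF_eq_false_iff.mpr hbF).symm
        · cases hxb : x b with
          | false => exact absurd (hcase b hb hxb) hbF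
          | true =>
            cases hcb : chiF F b with
            | false => exact absurd (chiF_eq_false_iff.1 hcb) hbF
            | true => rfl
      · push_neg at hcase
        obtain ⟨b, hba, hbZ, hbF⟩ := hcase
        have hbmem : b ∈ {c | x c = false} \ F := ⟨hbZ, hbF⟩
        have hsets : {c | x c = false} \ insert b F =
            ({c | x c = false} \ F) \ {b} := by
          ext c
          simp only [Set.mem_diff, Set.mem_insert_iff, Set.mem_singleton_iff,
            Set.mem_setOf_eq]
          tauto
        have h5 := Set.encard_diff_singleton_add_one hbmem
        have h6 : ({c | x c = false} \ insert b F).encard ≤ n := by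
          rw [hsets]
          have h7 : (({c | x c = false} \ F) \ {b}).encard + 1 ≤ (n : ℕ∞) + 1 := by
            rw [h5]
            have : ((n + 1 : ℕ) : ℕ∞) = (n : ℕ∞) + 1 := by push_cast; ring
            rw [← this]
            exact hcard
          exact (ENat.add_le_add_iff_right ENat.one_ne_top).1 h7
        obtain ⟨i, hi, hxi⟩ := ht2 ⟨b, hba⟩ x hZ
          (Set.insert_subset_iff.mpr ⟨hbZ, hFZ⟩) h6
        exact ⟨i, Or.inr (Set.mem_iUnion.2 ⟨⟨b, hba⟩, hi⟩), hxi⟩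

theorem klindelof_Xzero (hreg : κ.IsRegular) (hunc : ℵ₀ < κ) : KLindelof κ ↥(Xzero κ) := by
  intro 𝒰 h𝒰 hcov
  have h0 : ∀ U : 𝒰, ∃ W : Set (GenCantor κ), IsOpen W ∧ Subtype.val ⁻¹' W = U.1 :=
    fun U => isOpen_induced_iff.1 (h𝒰 U.1 U.2)
  choose W hWopen hWeq using h0
  have hcov' : ∀ x : GenCantor κ, {b | x b = false}.Finite → ∃ U : 𝒰, x ∈ W U := by
    intro x hx
    have : (⟨x, hx⟩ : ↥(Xzero κ)) ∈ ⋃₀ 𝒰 := hcov ▸ Set.mem_univ _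
    obtain ⟨U, hU, hmem⟩ := this
    refine ⟨⟨U, hU⟩, ?_⟩
    have h2 : (⟨x, hx⟩ : ↥(Xzero κ)) ∈ Subtype.val ⁻¹' W ⟨U, hU⟩ := by
      rw [hWeq ⟨U, hU⟩]; exact hmem
    exact h2
  have haux : ∀ n : ℕ, ∃ s : Set ↥𝒰, #s < κ ∧
      ∀ x : GenCantor κ, {b | x b = false}.Finite → (∅ : Set κ.ord.ToType) ⊆ {b | x b = false} →
        ({b | x b = false} \ ∅).encard ≤ n → ∃ i ∈ s, x ∈ W i :=
    fun n => klindelof_aux hreg n ∅ Set.finite_empty W hWopen hcov'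
  choose s hs1 hs2 using haux
  refine ⟨Subtype.val '' ⋃ n : ULift.{u} ℕ, s n.down, ?_, ?_, ?_⟩
  · rintro V ⟨U, _, rfl⟩
    exact U.2
  · refine lt_of_le_of_lt Cardinal.mk_image_le ?_
    have hulift : #(ULift.{u} ℕ) < κ := by
      rw [Cardinal.mk_uLift, Cardinal.mk_nat, Cardinal.lift_aleph0]
      exact hunc
    refine lt_of_le_of_lt (Cardinal.mk_iUnion_le _) ?_
    exact Cardinal.mul_lt_of_lt hreg.aleph0_le hulift
      (Cardinal.iSup_lt_of_isRegular hreg hulift fun n => hs1 n.down)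
  · rw [Set.eq_univ_iff_forall]
    intro p
    obtain ⟨m, hm⟩ : ∃ m : ℕ, ({b | p.1 b = false}).encard = m :=
      ⟨(p.2.toFinset).card, by rw [Set.Finite.encard_eq_coe_toFinset_card p.2]⟩
    obtain ⟨i, hi, hxi⟩ := hs2 m p.1 p.2 (Set.empty_subset _)
      (by rw [Set.diff_empty, hm])
    refine Set.mem_sUnion.2 ⟨i.1, ⟨i, Set.mem_iUnion.2 ⟨ULift.up m, hi⟩, rfl⟩, ?_⟩
    have h2 : p ∈ Subtype.val ⁻¹' W i := hxi
    rw [hWeq i] at h2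
    exact h2

/-! #### Weight of `Xzero` -/

theorem Nb_ext {a : κ.ord.ToType} {y y' : GenCantor κ}
    (h : ∀ b, b < a → y b = y' b) : Nb a y = Nb a y' := by
  ext x
  constructor <;> intro hx b hb
  · rw [hx b hb, h b hb]
  · rw [hx b hb, ← h b hb]

theorem basis_amb (hκ : ℵ₀ ≤ κ) :
    TopologicalSpace.IsTopologicalBasis {S : Set (GenCantor κ) | ∃ a y, S = Nb a y} := by
  refine TopologicalSpace.isTopologicalBasis_of_isOpen_of_nhds ?_ ?_
  · rintro u ⟨a, y, rfl⟩
    exact isOpen_Nb a y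
  · intro x u hxu hu
    obtain ⟨a, ha⟩ := (isOpen_iff_Nb hκ).1 hu x hxu
    exact ⟨Nb a x, ⟨a, x, rfl⟩, mem_Nb_self a x, ha⟩

theorem mk_basis_amb_le (hreg : κ.IsRegular) (hpow : (2 : Cardinal.{u}) ^< κ = κ) :
    #{S : Set (GenCantor κ) | ∃ a y, S = Nb a y} ≤ κ := by
  classical
  set g : (Σ a : κ.ord.ToType, ({b : κ.ord.ToType // b < a} → Bool)) →
      {S : Set (GenCantor κ) | ∃ a y, S = Nb a y} :=
    fun p => ⟨Nb p.1 (fun b => if h : b < p.1 then p.2 ⟨b, h⟩ else true),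
      ⟨p.1, _, rfl⟩⟩ with hg
  have hsurj : Function.Surjective g := by
    rintro ⟨S, a, y, rfl⟩
    refine ⟨⟨a, fun b => y b.1⟩, ?_⟩
    apply Subtype.ext
    show Nb a _ = Nb a y
    apply Nb_ext
    intro b hb
    simp [hb]
  refine le_trans (Cardinal.mk_le_of_surjective hsurj) ?_
  rw [Cardinal.mk_sigma]
  have harrow : ∀ a : κ.ord.ToType, #({b : κ.ord.ToType // b < a} → Bool) ≤ κ := by
    intro a
    have h1 : #({b : κ.ord.ToType // b < a} → Bool) = 2 ^ #{b : κ.ord.ToType // b < a} := by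
      rw [Cardinal.mk_arrow]
      simp
    have h2 := Cardinal.le_powerlt (2 : Cardinal.{u}) (mk_Iio_lt hreg a)
    rw [hpow] at h2
    exact le_trans (le_of_eq h1) h2
  refine le_trans (Cardinal.sum_le_sum _ (fun _ => κ) harrow) ?_
  rw [Cardinal.sum_const', Cardinal.mk_toType, Cardinal.card_ord]
  exact le_of_eq (Cardinal.mul_eq_self hreg.aleph0_le)

theorem hasWeight_Xzero (hreg : κ.IsRegular) (hpow : (2 : Cardinal.{u}) ^< κ = κ) :
    HasWeightLE κ ↥(Xzero κ) := by
  refine ⟨(Set.preimage Subtype.val) '' {S : Set (GenCantor κ) | ∃ a y, S = Nb a y},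
    (basis_amb hreg.aleph0_le).isInducing Topology.IsInducing.subtypeVal,
    le_trans Cardinal.mk_image_le (mk_basis_amb_le hreg hpow)⟩

/-! #### The strategy for player II -/

theorem exists_gt_toType (hreg : κ.IsRegular) (a : κ.ord.ToType) : ∃ b, a < b := by
  obtain ⟨b, hb⟩ := bound_of_small hreg (S := {a})
    (by rw [Cardinal.mk_singleton]
        exact lt_of_lt_of_le Cardinal.one_lt_aleph0 hreg.aleph0_le)
  exact ⟨b, hb a rfl⟩

open Classical in
/-- Pick an index above `a` such that the corresponding basic set intersected with `T`
is contained in `U`, if possible. -/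
noncomputable def pick (hreg : κ.IsRegular) (a : κ.ord.ToType) (x : GenCantor κ)
    (U T : Set ↥(Xzero κ)) : κ.ord.ToType :=
  if h : ∃ c, a < c ∧ (Subtype.val ⁻¹' Nb c x) ∩ T ⊆ U then Classical.choose h
  else Classical.choose (exists_gt_toType hreg a)

theorem pick_gt (hreg : κ.IsRegular) (a : κ.ord.ToType) (x : GenCantor κ)
    (U T : Set ↥(Xzero κ)) : a < pick hreg a x U T := by
  classical
  unfold pick
  split
  · next h => exact (Classical.choose_spec h).1
  · next h => exact Classical.choose_spec (exists_gt_toType hreg a)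

theorem pick_spec (hreg : κ.IsRegular) {a : κ.ord.ToType} {x : GenCantor κ}
    {U T : Set ↥(Xzero κ)} (h : ∃ c, a < c ∧ (Subtype.val ⁻¹' Nb c x) ∩ T ⊆ U) :
    (Subtype.val ⁻¹' Nb (pick hreg a x U T) x) ∩ T ⊆ U := by
  classical
  unfold pick
  rw [dif_pos h]
  exact (Classical.choose_spec h).2

/-- The winning strategy for player II on `Xzero`. -/
noncomputable def sigX (hreg : κ.IsRegular) (f : IMoves κ ↥(Xzero κ)) :
    κ.ord.ToType → Set ↥(Xzero κ) :=
  WellFounded.fix wellFounded_lt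
    (fun a rec =>
      (Subtype.val ⁻¹' Nb
        (pick hreg a (f a).2.1 (f a).1 (⋂ b, ⋂ h : b < a, rec b h)) (f a).2.1) ∩ (f a).1)

theorem sigX_eq (hreg : κ.IsRegular) (f : IMoves κ ↥(Xzero κ)) (a : κ.ord.ToType) :
    sigX hreg f a =
      (Subtype.val ⁻¹' Nb
        (pick hreg a (f a).2.1 (f a).1 (InterBelow (sigX hreg f) a)) (f a).2.1) ∩ (f a).1 := by
  rw [sigX, WellFounded.fix_eq]
  rfl

theorem sigX_isIIStrategy (hreg : κ.IsRegular) : IsIIStrategy (sigX hreg) := by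
  intro f g a
  refine WellFounded.induction (C := fun a => (∀ b, b ≤ a → f b = g b) →
    sigX hreg f a = sigX hreg g a) wellFounded_lt a ?_
  clear a
  intro a ih hfg
  · have hT : InterBelow (sigX hreg f) a = InterBelow (sigX hreg g) a := by
      unfold InterBelow
      exact Set.iInter_congr fun b => Set.iInter_congr fun hb =>
        ih b hb fun c hc => hfg c (le_of_lt (lt_of_le_of_lt hc hb))
    rw [sigX_eq, sigX_eq, hT, hfg a le_rfl]


theorem sigX_legal (hreg : κ.IsRegular) (f : IMoves κ ↥(Xzero κ)) (a : κ.ord.ToType)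
    (hI : LegalI (sigX hreg) f a) : LegalII (sigX hreg) f a := by
  obtain ⟨⟨W, hWopen, hU⟩, hx⟩ := hI
  refine ⟨⟨(Subtype.val ⁻¹' Nb (pick hreg a (f a).2.1 (f a).1
      (InterBelow (sigX hreg f) a)) (f a).2.1) ∩ W,
    ((isOpen_Nb _ _).preimage continuous_subtype_val).inter hWopen, ?_⟩, ?_, ?_⟩
  · rw [sigX_eq, hU, Set.inter_assoc]
  · rw [sigX_eq]
    exact ⟨mem_Nb_self _ _, hx⟩
  · rw [sigX_eq]
    exact Set.inter_subset_right

theorem sigX_winning (hreg : κ.IsRegular) (hunc : ℵ₀ < κ) (f : IMoves κ ↥(Xzero κ))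
    (hrun : ∀ a, LegalI (sigX hreg) f a ∧ LegalII (sigX hreg) f a) :
    (⋂ a, sigX hreg f a).Nonempty := by
  set σ := sigX hreg with hσ
  -- Every move of I sits inside the intersection of the previous moves.
  have hUsub : ∀ a, (f a).1 ⊆ InterBelow (σ f) a := by
    intro a
    obtain ⟨⟨W, _, hU⟩, _⟩ := (hrun a).1
    rw [hU]
    exact Set.inter_subset_right
  -- The pick condition is satisfied at every round.
  have hpick : ∀ a, ∃ c, a < c ∧
      (Subtype.val ⁻¹' Nb c (f a).2.1) ∩ InterBelow (σ f) a ⊆ (f a).1 := by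
    intro a
    obtain ⟨⟨W, hWopen, hU⟩, hx⟩ := (hrun a).1
    obtain ⟨W', hW'open, hW'eq⟩ := isOpen_induced_iff.1 hWopen
    have hxW' : (f a).2.1 ∈ W' := by
      have h1 : (f a).2 ∈ W := hU ▸ hx |>.1
      rw [← hW'eq] at h1
      exact h1
    obtain ⟨a₀, ha₀⟩ := (isOpen_iff_Nb hreg.aleph0_le).1 hW'open _ hxW'
    obtain ⟨a₁, ha₁⟩ := exists_gt_toType hreg a
    refine ⟨max a₀ a₁, lt_of_lt_of_le ha₁ (le_max_right a₀ a₁), ?_⟩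
    intro z hz
    rw [hU]
    refine ⟨?_, hz.2⟩
    rw [← hW'eq]
    exact ha₀ (Nb_antitone (le_max_left a₀ a₁) _ hz.1)
  set c : κ.ord.ToType → κ.ord.ToType :=
    fun a => pick hreg a (f a).2.1 (f a).1 (InterBelow (σ f) a) with hc
  have hcgt : ∀ a, a < c a := fun a => pick_gt hreg _ _ _ _
  have hcspec : ∀ a, (Subtype.val ⁻¹' Nb (c a) (f a).2.1) ∩ InterBelow (σ f) a ⊆ (f a).1 :=
    fun a => pick_spec hreg (hpick a)
  have hσa : ∀ a, σ f a = (Subtype.val ⁻¹' Nb (c a) (f a).2.1) ∩ (f a).1 :=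
    fun a => sigX_eq hreg f a
  -- later points stay in earlier moves
  have hCmem : ∀ a b, a < b → (f b).2 ∈ σ f a := by
    intro a b hab
    have h1 : (f b).2 ∈ (f b).1 := (hrun b).1.2
    have h2 := hUsub b h1
    exact Set.mem_iInter.1 (Set.mem_iInter.1 h2 a) hab
  -- agreement of coordinates
  have hD : ∀ a b, a ≤ b → ∀ e, e < c a → (f b).2.1 e = (f a).2.1 e := by
    intro a b hab e he
    rcases eq_or_lt_of_le hab with rfl | hab'
    · rfl
    · have h1 := hCmem a b hab'
      rw [hσa a] at h1
      exact h1.1 e he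
  set y : GenCantor κ := fun e => (f e).2.1 e with hy
  have hE : ∀ a, y ∈ Nb (c a) (f a).2.1 := by
    intro a e he
    rcases le_or_gt e a with h | h
    · exact (hD e a h e (hcgt e)).symm
    · exact hD a e (le_of_lt h) e he
  have hF : y ∈ Xzero κ := by
    by_contra hinf
    have hinf' : {e | y e = false}.Infinite := hinf
    set φ := hinf'.natEmbedding with hφ
    set ψ : ULift.{u} ℕ → κ.ord.ToType := fun n => (φ n.down).1 with hψ
    have hψlt : #(ULift.{u} ℕ) < κ := by
      rw [Cardinal.mk_uLift, Cardinal.mk_nat, Cardinal.lift_aleph0]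
      exact hunc
    obtain ⟨γ, hγ⟩ := bound_of_small hreg (S := Set.range ψ)
      (lt_of_le_of_lt Cardinal.mk_range_le hψlt)
    have hsub : ∀ n : ULift.{u} ℕ, ψ n ∈ {e | (f γ).2.1 e = false} := by
      intro n
      have h1 : ψ n < γ := hγ _ ⟨n, rfl⟩
      have h2 : (f γ).2.1 (ψ n) = y (ψ n) :=
        hD (ψ n) γ (le_of_lt h1) (ψ n) (hcgt (ψ n))
      rw [Set.mem_setOf_eq, h2]
      exact (φ n.down).2
    have hinj : Function.Injective ψ := by
      intro m n hmn
      have h3 : m.down = n.down := φ.injective (Subtype.ext hmn)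
      cases m; cases n; cases h3; rfl
    exact (Set.infinite_of_injective_forall_mem hinj hsub) ((f γ).2.2)
  refine ⟨⟨y, hF⟩, Set.mem_iInter.2 ?_⟩
  intro a
  refine WellFounded.induction (C := fun a => (⟨y, hF⟩ : ↥(Xzero κ)) ∈ σ f a)
    wellFounded_lt a ?_
  clear a
  intro a ih
  · have hT : (⟨y, hF⟩ : ↥(Xzero κ)) ∈ InterBelow (σ f) a :=
      Set.mem_iInter.2 fun b => Set.mem_iInter.2 fun hb => ih b hb
    have hN : (⟨y, hF⟩ : ↥(Xzero κ)) ∈ Subtype.val ⁻¹' Nb (c a) (f a).2.1 := hE a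
    have hmem : (⟨y, hF⟩ : ↥(Xzero κ)) ∈ (f a).1 := hcspec a ⟨hN, hT⟩
    rw [hσa a]
    exact ⟨hN, hmem⟩

theorem fSC_Xzero (hreg : κ.IsRegular) (hunc : ℵ₀ < κ)
    (hpow : (2 : Cardinal.{u}) ^< κ = κ) : fSCSpace κ ↥(Xzero κ) := by
  refine ⟨hasWeight_Xzero hreg hpow, sigX hreg, sigX_isIIStrategy hreg, ?_, ?_⟩
  · intro f a _ hI
    exact sigX_legal hreg f a hI
  · intro f hrun
    exact Or.inr (sigX_winning hreg hunc f hrun)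

end Stmt16Aux

/-- the set of elements of 2^κ with only finitely many zero values is a
nonempty κ-additive κ-perfect κ-Lindelöf fSC_κ-space. -/
theorem stmt_16 (κ : Cardinal.{u}) (hreg : κ.IsRegular) (hunc : ℵ₀ < κ)
    (hpow : (2 : Cardinal.{u}) ^< κ = κ) :
    Nonempty ↥{x : GenCantor κ | {a | x a = false}.Finite} ∧
    KAdditive κ ↥{x : GenCantor κ | {a | x a = false}.Finite} ∧
    KPerfect κ ↥{x : GenCantor κ | {a | x a = false}.Finite} ∧
    KLindelof κ ↥{x : GenCantor κ | {a | x a = false}.Finite} ∧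
    fSCSpace κ ↥{x : GenCantor κ | {a | x a = false}.Finite} := by
  exact ⟨⟨⟨fun _ => true, by show ({a | true = false} : Set κ.ord.ToType).Finite; simp⟩⟩, kAdditive_Xzero hreg, kPerfect_Xzero hreg,
    klindelof_Xzero hreg hunc, fSC_Xzero hreg hunc hpow⟩

end GDST
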